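/- Value-function comparison under robustification: let S, Ŝ be finite sets, R ⊆ Ŝ × S a relation, and suppose W̄ is a probability kernel on Ŝ × S (given state pair and action) whose Ŝ-marginal equals the abstract kernel p̂ and such that W̄((Ŝ × S) \ R' | ẑ, z, a) ≤ δ for target relation R'. If V : Ŝ → [0,1] and V_c : Ŝ × S → [0,1] satisfy V(ŝ) ≤ V_c(ŝ, s) for all (ŝ, s) ∈ R', then L(∑_{ŝ'} p̂(ŝ'|ẑ, a) V(ŝ') − δ) ≤ ∑_{(ŝ',s')} W̄(ŝ', s' | ẑ, z, a) V_c(ŝ', s') for all (ẑ, z) ∈ R. -/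
import Mathlib


open Finset

/-- The truncation function `L(x) = min(1, max(0, x))`. -/
noncomputable def truncL (x : ℝ) : ℝ := min 1 (max 0 x)

/-- Value-function comparison under robustification: if the coupling kernel `w`
puts at most `δ` mass outside the target relation `R'`, has `Shat`-marginal `phat`,
and `V ≤ V_c` on `R'`, then
`L(∑ phat(shat') V(shat') − δ) ≤ ∑ w(shat',s') V_c(shat',s')` for every `(zhat,z) ∈ R`. -/
theorem robust_value_comparison
    {Shat S : Type*} [Fintype Shat] [Fintype S]
    (R R' : Set (Shat × S)) [DecidablePred (· ∈ R')]
    (zhat : Shat) (z : S) (hz : (zhat, z) ∈ R)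
    (δ : ℝ) (hδ0 : 0 ≤ δ) (hδ1 : δ ≤ 1)
    (w : Shat → S → ℝ) (hw0 : ∀ shat' s', 0 ≤ w shat' s')
    (hw1 : ∑ shat' : Shat, ∑ s' : S, w shat' s' = 1)
    (phat : Shat → ℝ) (hmarg : ∀ shat', phat shat' = ∑ s', w shat' s')
    (hout : ∑ q ∈ Finset.univ.filter (fun q : Shat × S => q ∉ R'), w q.1 q.2 ≤ δ)
    (V : Shat → ℝ) (Vc : Shat → S → ℝ)
    (hV : ∀ shat', V shat' ∈ Set.Icc (0 : ℝ) 1)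
    (hVc : ∀ shat' s', Vc shat' s' ∈ Set.Icc (0 : ℝ) 1)
    (hdom : ∀ shat' s', (shat', s') ∈ R' → V shat' ≤ Vc shat' s') :
    truncL (∑ shat', phat shat' * V shat' - δ) ≤ ∑ shat', ∑ s', w shat' s' * Vc shat' s' := by
  have hRHS0 : (0:ℝ) ≤ ∑ shat', ∑ s', w shat' s' * Vc shat' s' := by
    apply Finset.sum_nonneg; intro a _; apply Finset.sum_nonneg; intro b _
    exact mul_nonneg (hw0 a b) ((hVc a b).1)
  have key : ∑ shat', phat shat' * V shat' - δ ≤ ∑ shat', ∑ s', w shat' s' * Vc shat' s' := by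
    have h1 : ∑ shat', phat shat' * V shat' = ∑ q : Shat × S, w q.1 q.2 * V q.1 := by
      rw [Fintype.sum_prod_type]
      refine Finset.sum_congr rfl fun a _ => ?_
      rw [hmarg a, Finset.sum_mul]
    have h2 : ∑ shat', ∑ s', w shat' s' * Vc shat' s'
        = ∑ q : Shat × S, w q.1 q.2 * Vc q.1 q.2 := by
      rw [Fintype.sum_prod_type]
    rw [h1, h2]
    rw [← Finset.sum_filter_add_sum_filter_not Finset.univ (fun q : Shat × S => q ∈ R')
      (fun q => w q.1 q.2 * V q.1),
      ← Finset.sum_filter_add_sum_filter_not Finset.univ (fun q : Shat × S => q ∈ R')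
      (fun q => w q.1 q.2 * Vc q.1 q.2)]
    have hA : ∑ q ∈ Finset.univ.filter (fun q : Shat × S => q ∈ R'), w q.1 q.2 * V q.1
        ≤ ∑ q ∈ Finset.univ.filter (fun q : Shat × S => q ∈ R'), w q.1 q.2 * Vc q.1 q.2 := by
      refine Finset.sum_le_sum fun q hq => ?_
      have hq' : q ∈ R' := (Finset.mem_filter.mp hq).2
      exact mul_le_mul_of_nonneg_left (hdom q.1 q.2 hq') (hw0 q.1 q.2)
    have hB : ∑ q ∈ Finset.univ.filter (fun q : Shat × S => q ∉ R'), w q.1 q.2 * V q.1 ≤ δ := by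
      refine le_trans (Finset.sum_le_sum fun q _ => ?_) hout
      calc w q.1 q.2 * V q.1 ≤ w q.1 q.2 * 1 :=
            mul_le_mul_of_nonneg_left ((hV q.1).2) (hw0 q.1 q.2)
        _ = w q.1 q.2 := mul_one _
    have hC : (0:ℝ) ≤ ∑ q ∈ Finset.univ.filter (fun q : Shat × S => q ∉ R'),
        w q.1 q.2 * Vc q.1 q.2 := by
      apply Finset.sum_nonneg; intro q _; exact mul_nonneg (hw0 q.1 q.2) ((hVc q.1 q.2).1)
    linarith
  unfold truncL
  rcases le_total (∑ shat', phat shat' * V shat' - δ) 0 with h | h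
  · rw [max_eq_left h]; simpa using le_trans (min_le_right 1 0) hRHS0
  · calc min 1 (max 0 (∑ shat', phat shat' * V shat' - δ))
        ≤ max 0 (∑ shat', phat shat' * V shat' - δ) := min_le_right _ _
      _ = ∑ shat', phat shat' * V shat' - δ := max_eq_right h
      _ ≤ _ := key
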